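/- Let L, R, D be nonnegative reals with L + R + D > 0, and let s be a complex number with Re s > 0. Then the admittance ρ = s / (L s² + R s + D) satisfies Re ρ ≥ (Re s / (L + R + D)) · min(|s|², |s|⁻⁴). -/

import Mathlib

open Complex

set_option maxHeartbeats 1000000

theorem admittance_re_lower_bound (L R D : ℝ) (hL : 0 ≤ L) (hR : 0 ≤ R) (hD : 0 ≤ D)
    (hsum : 0 < L + R + D) (s : ℂ) (hs : 0 < s.re) :
    (s.re / (L + R + D)) * min (‖s‖ ^ 2) ((‖s‖ ^ 4)⁻¹)
      ≤ (s / ((L : ℂ) * s ^ 2 + (R : ℂ) * s + (D : ℂ))).re := by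
  set x := s.re with hxdef
  set y := s.im with hydef
  have hx : 0 < x := hs
  set n : ℝ := x ^ 2 + y ^ 2 with hn
  have hn0 : 0 < n := by positivity
  set T : ℝ := L + R + D with hT
  set m : ℝ := min n 1 with hm
  set M : ℝ := max n 1 with hM
  have hm0 : 0 < m := lt_min hn0 one_pos
  have hmn : m ≤ n := min_le_left _ _
  have hm1 : m ≤ 1 := min_le_right _ _
  have hMn : n ≤ M := le_max_left _ _
  have hM1 : (1 : ℝ) ≤ M := le_max_right _ _
  have hxn : x ^ 2 ≤ n := by nlinarith [sq_nonneg y]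
  set w : ℂ := (L : ℂ) * s ^ 2 + (R : ℂ) * s + (D : ℂ) with hw
  have hwre : w.re = L * (x ^ 2 - y ^ 2) + R * x + D := by
    simp only [hw, Complex.add_re, Complex.mul_re, Complex.mul_im, Complex.add_im,
      Complex.ofReal_re, Complex.ofReal_im, pow_two]
    ring
  have hwim : w.im = L * (2 * x * y) + R * y := by
    simp only [hw, Complex.add_re, Complex.mul_re, Complex.mul_im, Complex.add_im,
      Complex.ofReal_re, Complex.ofReal_im, pow_two]
    ring
  have hA : x * w.re + y * w.im = L * n * x + R * n + D * x := by
    rw [hwre, hwim, hn]; ring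
  -- numerator lower bound
  have hxm : x * m ≤ n := by nlinarith [sq_nonneg (x - m), sq_nonneg m]
  have hnum : x * T * m ≤ L * n * x + R * n + D * x := by
    have h1 : L * (x * m) ≤ L * (n * x) := by
      nlinarith [mul_nonneg (mul_nonneg hL hx.le) (sub_nonneg.mpr hmn)]
    have h2 : R * (x * m) ≤ R * n := by
      nlinarith [mul_nonneg hR (sub_nonneg.mpr hxm)]
    have h3 : D * (x * m) ≤ D * x := by
      nlinarith [mul_nonneg (mul_nonneg hD hx.le) (sub_nonneg.mpr hm1)]
    have hid : x * T * m = L * (x * m) + R * (x * m) + D * (x * m) := by rw [hT]; ring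
    linarith
  have hnumpos : 0 < x * T * m := by positivity
  -- denominator nonzero
  have hB0 : 0 < Complex.normSq w := by
    rcases eq_or_ne w 0 with h | h
    · exfalso
      have h0 : x * w.re + y * w.im = 0 := by rw [h]; simp
      rw [hA] at h0
      nlinarith
    · exact Complex.normSq_pos.mpr h
  -- abs facts
  have habs2 : ‖s‖ ^ 2 = n := by
    rw [Complex.sq_norm, Complex.normSq_apply, hn]; ring
  have haM : ‖s‖ ≤ M := by
    nlinarith [sq_nonneg (‖s‖ - 1), norm_nonneg s]
  -- denominator upper bound
  have hBle : Complex.normSq w ≤ T ^ 2 * M ^ 2 := by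
    have htri : ‖w‖ ≤ L * n + R * ‖s‖ + D := by
      calc ‖w‖
          ≤ ‖(L : ℂ) * s ^ 2 + (R : ℂ) * s‖ + ‖(D : ℂ)‖ := by
            rw [hw]; exact norm_add_le _ _
        _ ≤ ‖(L : ℂ) * s ^ 2‖ + ‖(R : ℂ) * s‖
              + ‖(D : ℂ)‖ := by
            have := norm_add_le ((L : ℂ) * s ^ 2) ((R : ℂ) * s)
            linarith
        _ = L * n + R * ‖s‖ + D := by
            rw [norm_mul, norm_mul, norm_pow, habs2, Complex.norm_of_nonneg hL,
              Complex.norm_of_nonneg hR, Complex.norm_of_nonneg hD]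
    have habsw : ‖w‖ ≤ T * M := by
      have h1 : L * n ≤ L * M := by nlinarith [mul_nonneg hL (sub_nonneg.mpr hMn)]
      have h2 : R * ‖s‖ ≤ R * M := by
        nlinarith [mul_nonneg hR (sub_nonneg.mpr haM)]
      have h3 : D ≤ D * M := by nlinarith [mul_nonneg hD (sub_nonneg.mpr hM1)]
      rw [hT]; nlinarith
    calc Complex.normSq w = ‖w‖ ^ 2 := (Complex.sq_norm w).symm
      _ ≤ (T * M) ^ 2 := by nlinarith [norm_nonneg w]
      _ = T ^ 2 * M ^ 2 := by ring
  -- real part formula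
  have hre : (s / w).re = (x * w.re + y * w.im) / Complex.normSq w := by
    rw [Complex.div_re]; ring
  have habs4 : ‖s‖ ^ 4 = n ^ 2 := by
    have h4 : ‖s‖ ^ 4 = (‖s‖ ^ 2) ^ 2 := by ring
    rw [h4, habs2]
  have hn2 : (0 : ℝ) < n ^ 2 := by positivity
  have hminM : min (‖s‖ ^ 2) ((‖s‖ ^ 4)⁻¹) = m / M ^ 2 := by
    rw [habs2, habs4, hm, hM]
    rcases le_total n 1 with h | h
    · rw [min_eq_left h, max_eq_right h, one_pow, div_one]
      rw [min_eq_left]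
      rw [inv_eq_one_div, le_div_iff₀ hn2]
      nlinarith
    · rw [min_eq_right h, max_eq_left h]
      rw [min_eq_right, inv_eq_one_div]
      have hinv : (n ^ 2)⁻¹ ≤ 1 := by
        rw [inv_le_one_iff₀]
        right; nlinarith
      linarith
  rw [hre, hA, hminM]
  have heq : x / T * (m / M ^ 2) = (x * T * m) / (T ^ 2 * M ^ 2) := by
    have hT0 : T ≠ 0 := ne_of_gt hsum
    have hM0 : M ≠ 0 := by positivity
    field_simp
  rw [heq]
  exact div_le_div₀ (by linarith) hnum hB0 hBle
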